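/- For γ_d > 0 and γ̃ > 0, the function γ_e(ε) = (1 − δ_d(ε) + ε − δ_c(ε))/(δ_d(ε) + δ_c(ε) + 1/γ_d) with δ_d(ε) = 1/((1+ε)γ̃ + 1) and δ_c(ε) = ε, i.e. the effective SNR under ν = 1 (single-cell processing) analog feedback, has a unique stationary point at ε_SCP = 1/√(γ_d·γ̃) − 1; if γ_d·γ̃ > 1 then γ_e is strictly decreasing on [0,∞). -/

import Mathlib

theorem scp_effective_snr_stationary (γd γt : ℝ) (hγd : 0 < γd) (hγt : 0 < γt) :
    (∀ ε : ℝ, 0 ≤ ε →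
      (deriv (fun e : ℝ =>
          (1 - 1 / ((1 + e) * γt + 1) + e - e) /
            (1 / ((1 + e) * γt + 1) + e + 1 / γd)) ε = 0 ↔
        ε = 1 / Real.sqrt (γd * γt) - 1)) ∧
    (1 < γd * γt →
      StrictAntiOn (fun e : ℝ =>
          (1 - 1 / ((1 + e) * γt + 1) + e - e) /
            (1 / ((1 + e) * γt + 1) + e + 1 / γd))
        (Set.Ici 0)) := by
  have hu : ∀ e : ℝ, 0 ≤ e → 0 < (1 + e) * γt + 1 := by
    intro e he; nlinarith
  have hden : ∀ e : ℝ, 0 ≤ e → 0 < 1 / ((1 + e) * γt + 1) + e + 1 / γd := by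
    intro e he
    have h := hu e he
    positivity
  have hderiv : ∀ e : ℝ, 0 ≤ e →
      HasDerivAt (fun e : ℝ =>
          (1 - 1 / ((1 + e) * γt + 1) + e - e) /
            (1 / ((1 + e) * γt + 1) + e + 1 / γd))
        ((γt / γd - γt ^ 2 * (1 + e) ^ 2) /
          (((1 + e) * γt + 1) ^ 2 * (1 / ((1 + e) * γt + 1) + e + 1 / γd) ^ 2)) e := by
    intro e he
    have hu' : ((1 + e) * γt + 1) ≠ 0 := (hu e he).ne'
    have hd' : (1 / ((1 + e) * γt + 1) + e + 1 / γd) ≠ 0 := (hden e he).ne'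
    have h1 : HasDerivAt (fun x : ℝ => (1 + x) * γt + 1) γt e := by
      simpa using (((hasDerivAt_const e (1:ℝ)).add (hasDerivAt_id e)).mul_const γt).add_const 1
    have hinv : HasDerivAt (fun x : ℝ => 1 / ((1 + x) * γt + 1))
        (-γt / ((1 + e) * γt + 1) ^ 2) e := by
      have h2 := h1.inv hu'
      simp only [one_div]
      exact h2
    have hN : HasDerivAt (fun x : ℝ => 1 - 1 / ((1 + x) * γt + 1) + x - x)
        (0 - (-γt / ((1 + e) * γt + 1) ^ 2) + 1 - 1) e :=
      (((hasDerivAt_const e (1:ℝ)).sub hinv).add (hasDerivAt_id e)).sub (hasDerivAt_id e)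
    have hD : HasDerivAt (fun x : ℝ => 1 / ((1 + x) * γt + 1) + x + 1 / γd)
        (-γt / ((1 + e) * γt + 1) ^ 2 + 1) e :=
      (hinv.add (hasDerivAt_id e)).add_const (1 / γd)
    have := hN.div hD hd'
    refine this.congr_deriv ?_
    field_simp
    ring
  constructor
  · intro ε hε
    have hu' : ((1 + ε) * γt + 1) ≠ 0 := (hu ε hε).ne'
    have hd' : (1 / ((1 + ε) * γt + 1) + ε + 1 / γd) ≠ 0 := (hden ε hε).ne'
    have hpos : 0 < γd * γt := mul_pos hγd hγt
    have hsq : Real.sqrt (γd * γt) ^ 2 = γd * γt := Real.sq_sqrt hpos.le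
    have hsqpos : 0 < Real.sqrt (γd * γt) := Real.sqrt_pos.mpr hpos
    rw [(hderiv ε hε).deriv]
    have hdenpos : 0 < ((1 + ε) * γt + 1) ^ 2 *
        (1 / ((1 + ε) * γt + 1) + ε + 1 / γd) ^ 2 :=
      mul_pos (pow_pos (hu ε hε) 2) (pow_pos (hden ε hε) 2)
    constructor
    · intro h
      have hnum : γt / γd - γt ^ 2 * (1 + ε) ^ 2 = 0 := by
        rcases div_eq_zero_iff.mp h with h' | h'
        · exact h'
        · exact absurd h' hdenpos.ne'
      have h2 : (1 + ε) ^ 2 = 1 / (γd * γt) := by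
        field_simp at hnum ⊢
        nlinarith [hγt.ne']
      have h3 : 1 + ε = Real.sqrt (1 / (γd * γt)) := by
        rw [← h2, Real.sqrt_sq (by linarith)]
      rw [one_div, Real.sqrt_inv, ← one_div] at h3
      linarith
    · intro h
      have h1 : 1 + ε = 1 / Real.sqrt (γd * γt) := by rw [h]; ring
      have h2 : (1 + ε) ^ 2 = 1 / (γd * γt) := by
        rw [h1, div_pow, one_pow, hsq]
      have hnum : γt / γd - γt ^ 2 * (1 + ε) ^ 2 = 0 := by
        rw [h2]; field_simp; ring
      rw [hnum, zero_div]
  · intro h1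
    apply strictAntiOn_of_deriv_neg (convex_Ici 0)
    · intro x hx
      exact ((hderiv x hx).continuousAt).continuousWithinAt
    · intro x hx
      rw [interior_Ici] at hx
      have hx0 : (0:ℝ) ≤ x := le_of_lt hx
      rw [(hderiv x hx0).deriv]
      apply div_neg_of_neg_of_pos
      · rw [sub_neg, div_lt_iff₀ hγd]
        have h2 : (1:ℝ) ≤ (1 + x) ^ 2 := by nlinarith
        have h3 : γt < γt ^ 2 * γd := by nlinarith
        have h4 := mul_le_mul_of_nonneg_left h2
          (le_of_lt (mul_pos (pow_pos hγt 2) hγd))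
        nlinarith
      · exact mul_pos (pow_pos (hu x hx0) 2) (pow_pos (hden x hx0) 2)
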